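/- Suppose M has rank r, Z satisfies ‖Z‖_op ≤ λ, and M̂ = T_λ(M + Z) where T_λ is singular-value soft-thresholding. Then ‖M̂ - M‖_F² ≤ 8 λ² r. -/

import Mathlib

open Matrix

/-- Squared Frobenius norm: sum of squared entries. -/
def frobSq {n : ℕ} (A : Matrix (Fin n) (Fin n) ℝ) : ℝ := ∑ i, ∑ j, (A i j) ^ 2

/-- The ℓ₂ → ℓ₂ operator norm of a matrix. -/
noncomputable def opN {n : ℕ} (A : Matrix (Fin n) (Fin n) ℝ) : ℝ :=
  ‖Matrix.toEuclideanCLM (𝕜 := ℝ) A‖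

namespace STAux

open scoped Matrix.Norms.L2Operator

variable {n : ℕ}

/-- sum of squares of a vector -/
def nsq (x : Fin n → ℝ) : ℝ := ∑ i, x i ^ 2

lemma nsq_nonneg (x : Fin n → ℝ) : 0 ≤ nsq x :=
  Finset.sum_nonneg fun _ _ => sq_nonneg _

lemma nsq_eq_dot (x : Fin n → ℝ) : nsq x = x ⬝ᵥ x := by
  simp [nsq, dotProduct, sq]

lemma norm_euclid_sq (x : Fin n → ℝ) :
    ‖(WithLp.equiv 2 (Fin n → ℝ)).symm x‖ ^ 2 = nsq x := by
  rw [EuclideanSpace.norm_eq, Real.sq_sqrt (by positivity)]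
  simp [nsq, sq_abs]

lemma opN_eq_norm (A : Matrix (Fin n) (Fin n) ℝ) : opN A = ‖A‖ := rfl

lemma nsq_mulVec_le (A : Matrix (Fin n) (Fin n) ℝ) (x : Fin n → ℝ) :
    nsq (A *ᵥ x) ≤ opN A ^ 2 * nsq x := by
  have h := Matrix.l2_opNorm_mulVec A ((WithLp.equiv 2 (Fin n → ℝ)).symm x)
  have h1 : ‖(EuclideanSpace.equiv (Fin n) ℝ).symm (A *ᵥ (WithLp.equiv 2 (Fin n → ℝ)).symm x)‖
      = ‖(WithLp.equiv 2 (Fin n → ℝ)).symm (A *ᵥ x)‖ := rfl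
  rw [h1] at h
  have h2 : ‖(WithLp.equiv 2 (Fin n → ℝ)).symm (A *ᵥ x)‖ ^ 2 ≤ (‖A‖ * ‖(WithLp.equiv 2 (Fin n → ℝ)).symm x‖) ^ 2 :=
    pow_le_pow_left₀ (norm_nonneg _) h 2
  rw [norm_euclid_sq] at h2
  calc nsq (A *ᵥ x) ≤ (‖A‖ * ‖(WithLp.equiv 2 (Fin n → ℝ)).symm x‖) ^ 2 := h2
    _ = opN A ^ 2 * nsq x := by
        rw [mul_pow, norm_euclid_sq, opN_eq_norm]

lemma nsq_mulVec_orth {U : Matrix (Fin n) (Fin n) ℝ} (h : Uᵀ * U = 1) (x : Fin n → ℝ) :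
    nsq (U *ᵥ x) = nsq x := by
  rw [nsq_eq_dot, nsq_eq_dot, Matrix.dotProduct_mulVec, ← Matrix.mulVec_transpose,
    Matrix.mulVec_mulVec, h, Matrix.one_mulVec]

lemma opN_le_of_nsq {A : Matrix (Fin n) (Fin n) ℝ} {c : ℝ} (hc : 0 ≤ c)
    (h : ∀ x, nsq (A *ᵥ x) ≤ c ^ 2 * nsq x) : opN A ≤ c := by
  refine ContinuousLinearMap.opNorm_le_bound _ hc fun x => ?_
  set y : Fin n → ℝ := WithLp.equiv 2 (Fin n → ℝ) x with hy
  have hx : x = (WithLp.equiv 2 (Fin n → ℝ)).symm y := rfl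
  have happ : Matrix.toEuclideanCLM (𝕜 := ℝ) A x
      = (WithLp.equiv 2 (Fin n → ℝ)).symm (A *ᵥ y) := rfl
  rw [happ, hx]
  have h1 : ‖(WithLp.equiv 2 (Fin n → ℝ)).symm (A *ᵥ y)‖ ^ 2
      ≤ (c * ‖(WithLp.equiv 2 (Fin n → ℝ)).symm y‖) ^ 2 := by
    rw [norm_euclid_sq, mul_pow, norm_euclid_sq]
    exact h y
  have := le_of_pow_le_pow_left₀ two_ne_zero (by positivity) h1
  exact this

lemma diag_mulVec (d x : Fin n → ℝ) :
    (Matrix.diagonal d) *ᵥ x = fun i => d i * x i := by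
  ext i
  simp [Matrix.mulVec_diagonal]

/-- rank of a difference -/
lemma rank_sub_le (A B : Matrix (Fin n) (Fin n) ℝ) :
    (A - B).rank ≤ A.rank + B.rank := by
  have hle : LinearMap.range (A - B).mulVecLin ≤
      LinearMap.range A.mulVecLin ⊔ LinearMap.range B.mulVecLin := by
    rintro _ ⟨x, rfl⟩
    have : (A - B).mulVecLin x = A.mulVecLin x - B.mulVecLin x := by
      simp [Matrix.sub_mulVec]
    rw [this]
    exact Submodule.sub_mem _ (Submodule.mem_sup_left ⟨x, rfl⟩)
      (Submodule.mem_sup_right ⟨x, rfl⟩)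
  calc (A - B).rank ≤ Module.finrank ℝ
        (LinearMap.range A.mulVecLin ⊔ LinearMap.range B.mulVecLin : Submodule ℝ (Fin n → ℝ)) :=
        Submodule.finrank_mono hle
    _ ≤ A.rank + B.rank := Submodule.finrank_add_le_finrank_add_finrank _ _

/-- opN of transpose equals opN. -/
lemma opN_transpose (A : Matrix (Fin n) (Fin n) ℝ) : opN Aᵀ = opN A := by
  have h : Aᴴ = Aᵀ := by
    ext i j
    simp [Matrix.conjTranspose_apply]
  rw [opN_eq_norm, opN_eq_norm, ← h]
  exact Matrix.l2_opNorm_conjTranspose A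

/-- Frobenius norm squared is at most rank times operator norm squared. -/
lemma frobSq_le_rank_mul_opN_sq (A : Matrix (Fin n) (Fin n) ℝ) :
    frobSq A ≤ A.rank * opN A ^ 2 := by
  classical
  set W : Submodule ℝ (EuclideanSpace ℝ (Fin n)) :=
    LinearMap.range (Matrix.toEuclideanLin A) with hW
  have hrank : A.rank = Module.finrank ℝ W := by
    rw [Matrix.rank_eq_finrank_range_toLin A (PiLp.basisFun 2 ℝ (Fin n))
      (PiLp.basisFun 2 ℝ (Fin n))]
    rfl
  set b := stdOrthonormalBasis ℝ W with hb
  -- Parseval on W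
  have parseval : ∀ x : EuclideanSpace ℝ (Fin n), x ∈ W →
      ‖x‖ ^ 2 = ∑ i, (inner ℝ ((b i : W) : EuclideanSpace ℝ (Fin n)) x : ℝ) ^ 2 := by
    intro x hx
    set w : W := ⟨x, hx⟩ with hw
    have h1 : (inner ℝ w w : ℝ) = ∑ i, (inner ℝ w (b i) : ℝ) * (inner ℝ (b i) w : ℝ) :=
      (b.sum_inner_mul_inner w w).symm
    have h2 : ∀ i, (inner ℝ w (b i) : ℝ) = (inner ℝ (b i) w : ℝ) := fun i => real_inner_comm _ _
    have h3 : ‖x‖ ^ 2 = (inner ℝ w w : ℝ) := by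
      rw [← real_inner_self_eq_norm_sq]
      rfl
    rw [h3, h1]
    refine Finset.sum_congr rfl fun i _ => ?_
    rw [h2 i, sq]
    rfl
  -- columns of A
  have colmem : ∀ j : Fin n, ((WithLp.equiv 2 (Fin n → ℝ)).symm (A *ᵥ Pi.single j 1)) ∈ W := by
    intro j
    exact ⟨(WithLp.equiv 2 (Fin n → ℝ)).symm (Pi.single j 1), rfl⟩
  have colval : ∀ j i : Fin n, (A *ᵥ Pi.single j 1) i = A i j := by
    intro j i
    simp [Matrix.mulVec_single]
  have key : frobSq A = ∑ j, ‖((WithLp.equiv 2 (Fin n → ℝ)).symm (A *ᵥ Pi.single j 1))‖ ^ 2 := by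
    rw [frobSq, Finset.sum_comm]
    refine Finset.sum_congr rfl fun j _ => ?_
    rw [norm_euclid_sq, nsq]
    exact Finset.sum_congr rfl fun i _ => by rw [colval j i]
  rw [key]
  have step2 : ∑ j, ‖((WithLp.equiv 2 (Fin n → ℝ)).symm (A *ᵥ Pi.single j 1))‖ ^ 2
      = ∑ i, ∑ j, (inner ℝ ((b i : W) : EuclideanSpace ℝ (Fin n))
          ((WithLp.equiv 2 (Fin n → ℝ)).symm (A *ᵥ Pi.single j 1)) : ℝ) ^ 2 := by
    rw [Finset.sum_comm]
    exact Finset.sum_congr rfl fun j _ => parseval _ (colmem j)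
  rw [step2]
  -- each inner term
  have inner_eq : ∀ (i : Fin (Module.finrank ℝ W)) (j : Fin n),
      (inner ℝ ((b i : W) : EuclideanSpace ℝ (Fin n))
        ((WithLp.equiv 2 (Fin n → ℝ)).symm (A *ᵥ Pi.single j 1)) : ℝ)
      = (Aᵀ *ᵥ (WithLp.equiv 2 (Fin n → ℝ) ((b i : W) : EuclideanSpace ℝ (Fin n)))) j := by
    intro i j
    rw [PiLp.inner_apply]
    simp only [RCLike.inner_apply, starRingEnd_apply, star_trivial]
    rw [Matrix.mulVec, dotProduct]
    refine Finset.sum_congr rfl fun l _ => ?_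
    rw [Matrix.transpose_apply]
    have : ((WithLp.equiv 2 (Fin n → ℝ)).symm (A *ᵥ Pi.single j 1) : EuclideanSpace ℝ (Fin n)) l
        = A l j := colval j l
    rw [this]
    rfl
  have bound : ∀ i : Fin (Module.finrank ℝ W),
      ∑ j, (inner ℝ ((b i : W) : EuclideanSpace ℝ (Fin n))
        ((WithLp.equiv 2 (Fin n → ℝ)).symm (A *ᵥ Pi.single j 1)) : ℝ) ^ 2 ≤ opN A ^ 2 := by
    intro i
    have h1 : ∑ j, (inner ℝ ((b i : W) : EuclideanSpace ℝ (Fin n))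
        ((WithLp.equiv 2 (Fin n → ℝ)).symm (A *ᵥ Pi.single j 1)) : ℝ) ^ 2
        = nsq (Aᵀ *ᵥ (WithLp.equiv 2 (Fin n → ℝ) ((b i : W) : EuclideanSpace ℝ (Fin n)))) := by
      rw [nsq]
      exact Finset.sum_congr rfl fun j _ => by rw [inner_eq i j]
    rw [h1]
    have h2 := nsq_mulVec_le Aᵀ (WithLp.equiv 2 (Fin n → ℝ) ((b i : W) : EuclideanSpace ℝ (Fin n)))
    have h3 : nsq (WithLp.equiv 2 (Fin n → ℝ) ((b i : W) : EuclideanSpace ℝ (Fin n))) = 1 := by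
      rw [← norm_euclid_sq, (WithLp.equiv 2 (Fin n → ℝ)).symm_apply_apply]
      have hn : ‖((b i : W) : EuclideanSpace ℝ (Fin n))‖ = 1 := by
        rw [Submodule.norm_coe]
        exact b.orthonormal.1 i
      rw [hn]; norm_num
    rw [h3, opN_transpose, mul_one] at h2
    exact h2
  calc ∑ i, ∑ j, (inner ℝ ((b i : W) : EuclideanSpace ℝ (Fin n))
        ((WithLp.equiv 2 (Fin n → ℝ)).symm (A *ᵥ Pi.single j 1)) : ℝ) ^ 2
      ≤ ∑ _i : Fin (Module.finrank ℝ W), opN A ^ 2 :=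
        Finset.sum_le_sum fun i _ => bound i
    _ = (Module.finrank ℝ W) * opN A ^ 2 := by
        rw [Finset.sum_const, Finset.card_univ, Fintype.card_fin, nsmul_eq_mul]
    _ = A.rank * opN A ^ 2 := by rw [hrank]


lemma opN_nonneg (A : Matrix (Fin n) (Fin n) ℝ) : 0 ≤ opN A := norm_nonneg _

lemma opN_add_le (A B : Matrix (Fin n) (Fin n) ℝ) : opN (A + B) ≤ opN A + opN B :=
  norm_add_le A B

end STAux

open STAux

/-- If `rank M = r`, `‖Z‖_op ≤ λ`, and `M̂ = T_λ(M + Z)` is the singular-value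
soft-thresholding of `M + Z` (given through an SVD), then `‖M̂ - M‖_F² ≤ 8 λ² r`. -/
theorem soft_threshold_denoise_frobSq (n r : ℕ) (lam : ℝ) (hlam : 0 ≤ lam)
    (M Z : Matrix (Fin n) (Fin n) ℝ) (hrank : M.rank = r) (hZ : opN Z ≤ lam)
    (U V : Matrix (Fin n) (Fin n) ℝ) (σ : Fin n → ℝ)
    (hU : U * Uᵀ = 1) (hV : V * Vᵀ = 1) (hσ : ∀ i, 0 ≤ σ i)
    (hSVD : M + Z = U * Matrix.diagonal σ * Vᵀ)
    (Mhat : Matrix (Fin n) (Fin n) ℝ)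
    (hMhat : Mhat = U * Matrix.diagonal (fun i => max (σ i - lam) 0) * Vᵀ) :
    frobSq (Mhat - M) ≤ 8 * lam ^ 2 * r := by
  classical
  have hUo : Uᵀ * U = 1 := mul_eq_one_comm.mp hU
  have hVo : Vᵀ * V = 1 := mul_eq_one_comm.mp hV
  have hVTo : (Vᵀ)ᵀ * Vᵀ = 1 := by rw [Matrix.transpose_transpose]; exact hV
  set S : Finset (Fin n) := Finset.univ.filter (fun i => lam < σ i) with hS
  -- Step A1: card S ≤ r
  have cardS : S.card ≤ r := by
    set g : {i // i ∈ S} → (Fin n → ℝ) :=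
      fun i => M.mulVecLin (V.mulVecLin (Pi.single i.val 1)) with hg
    have hli : LinearIndependent ℝ g := by
      rw [Fintype.linearIndependent_iff]
      intro c hc
      by_contra hcon
      push_neg at hcon
      obtain ⟨i₀, hi₀⟩ := hcon
      set c' : Fin n → ℝ := fun j => if h : j ∈ S then c ⟨j, h⟩ else 0 with hc'
      have hc'sum : (∑ i, c i • (Pi.single (i : Fin n) (1 : ℝ) : Fin n → ℝ)) = c' := by
        funext j
        rw [Finset.sum_apply]
        by_cases h : j ∈ S
        · simp only [Pi.smul_apply, Pi.single_apply, smul_eq_mul]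
          rw [Finset.sum_eq_single (⟨j, h⟩ : {i // i ∈ S})]
          · simp [hc', h]
          · intro b _ hb
            have hne : (b : Fin n) ≠ j := fun e => hb (Subtype.ext e)
            rw [if_neg hne.symm, mul_zero]
          · intro hb; exact absurd (Finset.mem_univ _) hb
        · simp only [Pi.smul_apply, Pi.single_apply, smul_eq_mul, hc']
          rw [dif_neg h]
          refine Finset.sum_eq_zero fun b _ => ?_
          have hne : (b : Fin n) ≠ j := fun e => h (e ▸ b.2)
          rw [if_neg hne.symm, mul_zero]
      have hsum : ∑ i, c i • g i = M *ᵥ (V *ᵥ c') := by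
        have hterm : ∀ i : {i // i ∈ S}, c i • g i
            = (M.mulVecLin ∘ₗ V.mulVecLin) (c i • (Pi.single (i : Fin n) (1 : ℝ) : Fin n → ℝ)) := by
          intro i
          rw [LinearMap.map_smul]
          rfl
        rw [Finset.sum_congr rfl (fun i _ => hterm i), ← map_sum, hc'sum]
        rfl
      rw [hsum] at hc
      set x : Fin n → ℝ := V *ᵥ c' with hx
      have hMZ : (M + Z) *ᵥ x = Z *ᵥ x := by
        rw [Matrix.add_mulVec, hc, zero_add]
      have hlhs : (M + Z) *ᵥ x = U *ᵥ (Matrix.diagonal σ *ᵥ c') := by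
        rw [hx, hSVD, Matrix.mulVec_mulVec, Matrix.mul_assoc (U * Matrix.diagonal σ) Vᵀ V,
          hVo, Matrix.mul_one, ← Matrix.mulVec_mulVec]
      have e1 : nsq ((M + Z) *ᵥ x) = ∑ j, (σ j * c' j) ^ 2 := by
        rw [hlhs, nsq_mulVec_orth hUo, diag_mulVec]
        rfl
      have hxnsq : nsq x = nsq c' := nsq_mulVec_orth hVo c'
      have e2 : nsq (Z *ᵥ x) ≤ lam ^ 2 * nsq c' := by
        have h1 := nsq_mulVec_le Z x
        have h2 : opN Z ^ 2 ≤ lam ^ 2 := pow_le_pow_left₀ (opN_nonneg Z) hZ 2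
        have h3 : opN Z ^ 2 * nsq x ≤ lam ^ 2 * nsq c' := by
          rw [hxnsq]
          exact mul_le_mul_of_nonneg_right h2 (nsq_nonneg c')
        exact h1.trans h3
      have hc'i₀ : c' (i₀ : Fin n) ≠ 0 := by
        have hv : c' (i₀ : Fin n) = c i₀ := by simp [hc', i₀.2]
        rw [hv]
        exact hi₀
      have e3 : lam ^ 2 * nsq c' < ∑ j, (σ j * c' j) ^ 2 := by
        rw [nsq, Finset.mul_sum]
        refine Finset.sum_lt_sum (fun j _ => ?_) ⟨(i₀ : Fin n), Finset.mem_univ _, ?_⟩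
        · by_cases h : j ∈ S
          · have hlt : lam < σ j := by
              have := Finset.mem_filter.mp h
              exact this.2
            rw [mul_pow]
            exact mul_le_mul_of_nonneg_right
              (pow_le_pow_left₀ hlam hlt.le 2) (sq_nonneg _)
          · have hz : c' j = 0 := by simp [hc', h]
            simp [hz]
        · have hlt : lam < σ (i₀ : Fin n) := by
            have := Finset.mem_filter.mp i₀.2
            exact this.2
          rw [mul_pow]
          refine mul_lt_mul_of_pos_right ?_ ?_
          · exact pow_lt_pow_left₀ hlt hlam two_ne_zero
          · rw [← sq_abs]
            exact pow_pos (abs_pos.mpr hc'i₀) 2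
      have heq := congrArg nsq hMZ
      rw [e1] at heq
      have : ∑ j, (σ j * c' j) ^ 2 ≤ lam ^ 2 * nsq c' := heq ▸ e2
      linarith
    have hspan := finrank_span_eq_card hli
    have hle : Submodule.span ℝ (Set.range g) ≤ LinearMap.range M.mulVecLin := by
      rw [Submodule.span_le]
      rintro _ ⟨i, rfl⟩
      exact ⟨V.mulVecLin (Pi.single i.val 1), rfl⟩
    have hmono := Submodule.finrank_mono hle
    rw [hspan, Fintype.card_coe] at hmono
    rw [← hrank, Matrix.rank]
    exact hmono
  -- Step A2: rank Mhat ≤ r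
  have hrankMhat : Mhat.rank ≤ r := by
    have h1 : Mhat.rank ≤ (Matrix.diagonal (fun i => max (σ i - lam) 0)).rank := by
      rw [hMhat, Matrix.mul_assoc]
      exact le_trans (Matrix.rank_mul_le_right U _) (Matrix.rank_mul_le_left _ Vᵀ)
    have h2 : (Matrix.diagonal (fun i => max (σ i - lam) 0)).rank
        = Fintype.card {i // max (σ i - lam) 0 ≠ 0} := Matrix.rank_diagonal _
    have h3 : Fintype.card {i // max (σ i - lam) 0 ≠ 0} = S.card := by
      rw [Fintype.card_subtype]
      congr 1
      refine Finset.filter_congr fun i _ => ?_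
      rw [ne_eq, max_eq_right_iff, sub_nonpos, not_le]
    omega
  -- Step B: operator norm bound
  set E : Fin n → ℝ := fun i => max (σ i - lam) 0 - σ i with hE
  have hXeq : Mhat - (M + Z) = U * Matrix.diagonal E * Vᵀ := by
    rw [hMhat, hSVD, ← Matrix.sub_mul, ← Matrix.mul_sub, Matrix.diagonal_sub]
  have hopX : opN (U * Matrix.diagonal E * Vᵀ) ≤ lam := by
    refine opN_le_of_nsq hlam fun x => ?_
    rw [Matrix.mul_assoc, ← Matrix.mulVec_mulVec, ← Matrix.mulVec_mulVec,
      nsq_mulVec_orth hUo, diag_mulVec]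
    have hy : nsq (Vᵀ *ᵥ x) = nsq x := nsq_mulVec_orth hVTo x
    rw [← hy]
    set y : Fin n → ℝ := Vᵀ *ᵥ x with hyy
    show ∑ i, (E i * y i) ^ 2 ≤ lam ^ 2 * ∑ i, y i ^ 2
    rw [Finset.mul_sum]
    refine Finset.sum_le_sum fun i _ => ?_
    have hEi : E i ^ 2 ≤ lam ^ 2 := by
      refine sq_le_sq' ?_ ?_
      · have h1 : σ i - lam ≤ max (σ i - lam) 0 := le_max_left _ _
        rw [hE]
        simp only
        linarith
      · have h1 : max (σ i - lam) 0 ≤ σ i := max_le (by linarith) (hσ i)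
        rw [hE]
        simp only
        linarith
    rw [mul_pow]
    exact mul_le_mul_of_nonneg_right hEi (sq_nonneg _)
  have hop : opN (Mhat - M) ≤ 2 * lam := by
    have hsplit : Mhat - M = (U * Matrix.diagonal E * Vᵀ) + Z := by
      rw [← hXeq]
      abel
    rw [hsplit]
    calc opN (U * Matrix.diagonal E * Vᵀ + Z)
        ≤ opN (U * Matrix.diagonal E * Vᵀ) + opN Z := opN_add_le _ _
      _ ≤ lam + lam := add_le_add hopX hZ
      _ = 2 * lam := by ring
  -- Final assembly
  have hfrob := frobSq_le_rank_mul_opN_sq (Mhat - M)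
  have hr2 : (Mhat - M).rank ≤ 2 * r := by
    have := rank_sub_le Mhat M
    omega
  have hop2 : opN (Mhat - M) ^ 2 ≤ (2 * lam) ^ 2 :=
    pow_le_pow_left₀ (opN_nonneg _) hop 2
  calc frobSq (Mhat - M) ≤ (Mhat - M).rank * opN (Mhat - M) ^ 2 := hfrob
    _ ≤ (2 * r : ℝ) * (2 * lam) ^ 2 := by
        refine mul_le_mul ?_ hop2 (sq_nonneg _) (by positivity)
        exact_mod_cast hr2
    _ = 8 * lam ^ 2 * r := by ring
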